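/- Let f(y) = −(1/2)y². For every pair of points P, Q ∈ ℝ³ there exists a unique v ∈ ℝ³ such that the solution γ = (x, y, x̃) : ℝ → ℝ³ of the geodesic system x'' = 0, y'' = (x')²·y, x̃'' = −2y·x'·y' with γ(0) = P and γ'(0) = v satisfies γ(1) = Q. (Hence the exponential map of S₋ at every point P is a bijection from T_Pℝ³ onto ℝ³.) -/

import Mathlib

noncomputable section
namespace SminusAux

lemma derivdiff (f : ℝ → ℝ) (h : ContDiff ℝ 2 f) : Differentiable ℝ (deriv f) :=
  ((contDiff_succ_iff_deriv.mp (by exact_mod_cast h : ContDiff ℝ ((1:ℕ)+1) f)).2.2).differentiable (by simp)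

lemma hasDerivAt_expc (a t : ℝ) : HasDerivAt (fun s => Real.exp (a*s)) (a * Real.exp (a*t)) t := by
  have h := ((hasDerivAt_id' t).const_mul a).exp
  convert h using 1; ring

/-- family of solutions -/
def sol (α β a : ℝ) : ℝ → ℝ := fun t => α * Real.exp (a*t) + β * Real.exp (-a*t)

lemma sol_hasDerivAt (α β a t : ℝ) :
    HasDerivAt (sol α β a) (sol (a*α) (-(a*β)) a t) t := by
  have h1 := (hasDerivAt_expc a t).const_mul α
  have h2 := (hasDerivAt_expc (-a) t).const_mul β
  have h := h1.add h2
  have e : α * (a * Real.exp (a*t)) + β * (-a * Real.exp (-a*t)) = sol (a*α) (-(a*β)) a t := by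
    simp only [sol]; ring
  rw [e] at h
  exact h

lemma sol_contDiff (α β a : ℝ) (n : ℕ∞) : ContDiff ℝ n (sol α β a) := by
  unfold sol; fun_prop

lemma sol_deriv (α β a : ℝ) : deriv (sol α β a) = sol (a*α) (-(a*β)) a :=
  funext fun t => (sol_hasDerivAt α β a t).deriv

lemma lin_hasDerivAt (c d t : ℝ) : HasDerivAt (fun s : ℝ => c + d*s) d t := by
  simpa using ((hasDerivAt_id t).const_mul d).const_add c

lemma lin_deriv (c d : ℝ) : deriv (fun s : ℝ => c + d*s) = fun _ => d :=
  funext fun t => (lin_hasDerivAt c d t).deriv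

/-- IVP uniqueness for z'' = a² z -/
lemma keyA (a : ℝ) (z : ℝ → ℝ) (hz : ContDiff ℝ 2 z)
    (hode : ∀ t, deriv (deriv z) t = a^2 * z t) (h0 : z 0 = 0) (h1 : deriv z 0 = 0) :
    ∀ t, z t = 0 := by
  have hdz : Differentiable ℝ z := hz.differentiable (by norm_num)
  have hdz' : Differentiable ℝ (deriv z) := derivdiff z hz
  set h : ℝ → ℝ := fun t => deriv z t - a * z t with hh
  have hder : ∀ t, HasDerivAt h (-a * h t) t := by
    intro t
    have H := ((hdz' t).hasDerivAt).sub (((hdz t).hasDerivAt).const_mul a)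
    have e : deriv (deriv z) t - a * deriv z t = -a * h t := by
      rw [hode t]; simp only [hh]; ring
    rwa [e] at H
  have hg : ∀ t, HasDerivAt (fun t => Real.exp (a*t) * h t) 0 t := by
    intro t
    have H := (hasDerivAt_expc a t).mul (hder t)
    have e : a * Real.exp (a*t) * h t + Real.exp (a*t) * (-a * h t) = 0 := by ring
    rwa [e] at H
  have hgc : ∀ t, Real.exp (a*t) * h t = Real.exp (a*0) * h 0 :=
    fun t => is_const_of_deriv_eq_zero (fun s => (hg s).differentiableAt) (fun s => (hg s).deriv) t 0
  have hh0 : h 0 = 0 := by simp only [hh]; rw [h0, h1]; ring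
  have hzero : ∀ t, h t = 0 := by
    intro t
    have := hgc t
    rw [hh0, mul_zero] at this
    exact (mul_eq_zero.mp this).resolve_left (Real.exp_ne_zero _)
  have hz' : ∀ t, deriv z t = a * z t := by
    intro t; have := hzero t; simp only [hh] at this; linarith
  have hk : ∀ t, HasDerivAt (fun t => Real.exp (-a*t) * z t) 0 t := by
    intro t
    have H := (hasDerivAt_expc (-a) t).mul ((hdz t).hasDerivAt)
    have e : -a * Real.exp (-a*t) * z t + Real.exp (-a*t) * deriv z t = 0 := by
      rw [hz' t]; ring
    rwa [e] at H
  have hkc : ∀ t, Real.exp (-a*t) * z t = Real.exp (-a*0) * z 0 :=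
    fun t => is_const_of_deriv_eq_zero (fun s => (hk s).differentiableAt) (fun s => (hk s).deriv) t 0
  intro t
  have := hkc t
  rw [h0, mul_zero] at this
  exact (mul_eq_zero.mp this).resolve_left (Real.exp_ne_zero _)



/-- representation of solutions of z'' = a² z, a ≠ 0 -/
lemma rep (a : ℝ) (ha : a ≠ 0) (z : ℝ → ℝ) (hz : ContDiff ℝ 2 z)
    (hode : ∀ t, deriv (deriv z) t = a^2 * z t) :
    ∀ t, z t = sol ((z 0 + deriv z 0 / a)/2) ((z 0 - deriv z 0 / a)/2) a t := by
  set α := (z 0 + deriv z 0 / a)/2 with hα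
  set β := (z 0 - deriv z 0 / a)/2 with hβ
  set w : ℝ → ℝ := fun t => z t - sol α β a t with hwdef
  have hdz : Differentiable ℝ z := hz.differentiable (by norm_num)
  have hw : ContDiff ℝ 2 w := hz.sub (sol_contDiff α β a 2)
  have hw' : deriv w = fun t => deriv z t - sol (a*α) (-(a*β)) a t := by
    funext t
    exact (((hdz t).hasDerivAt).sub (sol_hasDerivAt α β a t)).deriv
  have hw'' : ∀ t, deriv (deriv w) t = a^2 * w t := by
    intro t
    rw [hw']
    have H := (((derivdiff z hz) t).hasDerivAt).sub (sol_hasDerivAt (a*α) (-(a*β)) a t)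
    rw [show deriv (fun t => deriv z t - sol (a*α) (-(a*β)) a t) t = _ from H.deriv, hode t]
    simp only [hwdef, sol]; ring
  have hw0 : w 0 = 0 := by
    simp only [hwdef, sol]
    rw [hα, hβ]
    simp; ring
  have hw'0 : deriv w 0 = 0 := by
    rw [hw']
    simp only [sol]
    rw [hα, hβ]
    field_simp
    simp
    ring
  have hz0 := keyA a w hw hw'' hw0 hw'0
  intro t
  have := hz0 t
  simp only [hwdef] at this
  linarith

/-- C² functions with vanishing second derivative are affine -/
lemma affine (x : ℝ → ℝ) (hx : ContDiff ℝ 2 x) (h : ∀ t, deriv (deriv x) t = 0) :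
    ∀ t, x t = x 0 + deriv x 0 * t := by
  have hdx : Differentiable ℝ x := hx.differentiable (by norm_num)
  have hc : ∀ t, deriv x t = deriv x 0 :=
    fun t => is_const_of_deriv_eq_zero (derivdiff x hx) h t 0
  intro t
  have key : ∀ s : ℝ, HasDerivAt (fun u => x u - deriv x 0 * u) 0 s := by
    intro s
    have H := (hdx s).hasDerivAt.sub ((hasDerivAt_id s).const_mul (deriv x 0))
    have e : deriv x s - deriv x 0 * 1 = 0 := by rw [hc s]; ring
    rwa [e] at H
  have := is_const_of_deriv_eq_zero (fun s => (key s).differentiableAt)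
    (fun s => (key s).deriv) t 0
  simp at this
  linarith

/-- BVP uniqueness: z'' = a² z with z(0) = z(1) = 0 forces z ≡ 0 -/
lemma bvp (a : ℝ) (z : ℝ → ℝ) (hz : ContDiff ℝ 2 z)
    (hode : ∀ t, deriv (deriv z) t = a^2 * z t) (h0 : z 0 = 0) (h1 : z 1 = 0) :
    ∀ t, z t = 0 := by
  rcases eq_or_ne a 0 with rfl | ha
  · have haff := affine z hz (by intro t; rw [hode t]; ring)
    have e1 := haff 1
    rw [h0, h1] at e1
    have hd : deriv z 0 = 0 := by linarith
    intro t
    rw [haff t, h0, hd]; ring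
  · have hrep := rep a ha z hz hode
    have e1 := hrep 1
    rw [h1, h0] at e1
    simp only [sol] at e1
    have hne : Real.exp (a*1) - Real.exp (-a*1) ≠ 0 := by
      refine sub_ne_zero.mpr (fun h => ha ?_)
      have := Real.exp_eq_exp.mp h
      linarith
    have e2 : deriv z 0 / a / 2 * (Real.exp (a*1) - Real.exp (-a*1)) = 0 := by
      linear_combination -e1
    have hd : deriv z 0 = 0 := by
      rcases mul_eq_zero.mp e2 with h | h
      · field_simp at h; simpa using h
      · exact absurd h hne
    exact keyA a z hz hode h0 hd

lemma deriv_sub' (f g : ℝ → ℝ) (hf : ContDiff ℝ 2 f) (hg : ContDiff ℝ 2 g) :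
    deriv (fun s => f s - g s) = fun s => deriv f s - deriv g s :=
  funext fun t => deriv_sub (hf.differentiable (by norm_num) t) (hg.differentiable (by norm_num) t)

def Geo (P Q v : ℝ × ℝ × ℝ) : Prop :=
  ∃ x y xt : ℝ → ℝ,
    ContDiff ℝ 2 x ∧ ContDiff ℝ 2 y ∧ ContDiff ℝ 2 xt ∧
    (∀ t : ℝ, deriv (deriv x) t = 0) ∧
    (∀ t : ℝ, deriv (deriv y) t = (deriv x t) ^ 2 * y t) ∧
    (∀ t : ℝ, deriv (deriv xt) t = -2 * y t * deriv x t * deriv y t) ∧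
    (x 0, y 0, xt 0) = P ∧
    (deriv x 0, deriv y 0, deriv xt 0) = v ∧
    (x 1, y 1, xt 1) = Q

lemma uniq (P Q v w : ℝ × ℝ × ℝ) (hv : Geo P Q v) (hw : Geo P Q w) : v = w := by
  obtain ⟨p1, p2, p3⟩ := P
  obtain ⟨q1, q2, q3⟩ := Q
  obtain ⟨x₁, y₁, xt₁, hx₁, hy₁, hxt₁, hex₁, hey₁, hext₁, hP₁, hv₁, hQ₁⟩ := hv
  obtain ⟨x₂, y₂, xt₂, hx₂, hy₂, hxt₂, hex₂, hey₂, hext₂, hP₂, hv₂, hQ₂⟩ := hw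
  simp only [Prod.mk.injEq] at hP₁ hP₂ hQ₁ hQ₂
  subst hv₁; subst hv₂
  -- x parts
  have hd : ∀ (x : ℝ → ℝ), ContDiff ℝ 2 x → (∀ t, deriv (deriv x) t = 0) →
      x 0 = p1 → x 1 = q1 → ∀ t, deriv x t = q1 - p1 := by
    intro x hx hex h0 h1 t
    have haff := affine x hx hex
    have hc : ∀ t, deriv x t = deriv x 0 :=
      fun t => is_const_of_deriv_eq_zero (derivdiff x hx) hex t 0
    have e1 := haff 1
    rw [h0, h1] at e1
    rw [hc t]; linarith
  have hd₁ := hd x₁ hx₁ hex₁ hP₁.1 hQ₁.1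
  have hd₂ := hd x₂ hx₂ hex₂ hP₂.1 hQ₂.1
  -- y parts
  set z : ℝ → ℝ := fun t => y₁ t - y₂ t with hzdef
  have hz2 : ContDiff ℝ 2 z := hy₁.sub hy₂
  have hz' : deriv z = fun t => deriv y₁ t - deriv y₂ t := deriv_sub' y₁ y₂ hy₁ hy₂
  have hz'' : ∀ t, deriv (deriv z) t = (q1 - p1)^2 * z t := by
    intro t
    rw [hz', deriv_fun_sub (derivdiff y₁ hy₁ t) (derivdiff y₂ hy₂ t), hey₁ t, hey₂ t,
      hd₁ t, hd₂ t]
    simp only [hzdef]; ring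
  have hz0 : z 0 = 0 := by simp only [hzdef]; rw [hP₁.2.1, hP₂.2.1]; ring
  have hz1 : z 1 = 0 := by simp only [hzdef]; rw [hQ₁.2.1, hQ₂.2.1]; ring
  have hzz := bvp (q1 - p1) z hz2 hz'' hz0 hz1
  have hy_eq : y₁ = y₂ := funext fun t => by have := hzz t; simp only [hzdef] at this; linarith
  have hdy_eq : deriv y₁ = deriv y₂ := by rw [hy_eq]
  -- xt parts
  set W : ℝ → ℝ := fun t => xt₁ t - xt₂ t with hWdef
  have hW2 : ContDiff ℝ 2 W := hxt₁.sub hxt₂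
  have hW' : deriv W = fun t => deriv xt₁ t - deriv xt₂ t := deriv_sub' xt₁ xt₂ hxt₁ hxt₂
  have hW'' : ∀ t, deriv (deriv W) t = 0 := by
    intro t
    rw [hW', deriv_fun_sub (derivdiff xt₁ hxt₁ t) (derivdiff xt₂ hxt₂ t), hext₁ t, hext₂ t,
      hd₁ t, hd₂ t, hy_eq]
    ring
  have haffW := affine W hW2 hW''
  have hW0 : W 0 = 0 := by simp only [hWdef]; rw [hP₁.2.2, hP₂.2.2]; ring
  have hW1 : W 1 = 0 := by simp only [hWdef]; rw [hQ₁.2.2, hQ₂.2.2]; ring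
  have hWd : deriv W 0 = 0 := by have := haffW 1; rw [hW0, hW1] at this; linarith
  rw [hW'] at hWd
  have hWd' : deriv xt₁ 0 - deriv xt₂ 0 = 0 := hWd
  simp only [Prod.mk.injEq]
  refine ⟨by rw [hd₁ 0, hd₂ 0], by rw [hdy_eq], by linarith⟩

lemma exist (P Q : ℝ × ℝ × ℝ) : ∃ v, Geo P Q v := by
  obtain ⟨p1, p2, p3⟩ := P
  obtain ⟨q1, q2, q3⟩ := Q
  set a := q1 - p1 with ha_def
  -- the x component, common to both cases
  set x : ℝ → ℝ := fun t => p1 + a * t with hxdef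
  have hx2 : ContDiff ℝ 2 x := by rw [hxdef]; fun_prop
  have hx' : deriv x = fun _ => a := by rw [hxdef]; exact lin_deriv p1 a
  have hx'' : ∀ t, deriv (deriv x) t = 0 := by rw [hx']; simp
  have hx0 : x 0 = p1 := by simp [hxdef]
  have hx1 : x 1 = q1 := by simp [hxdef, ha_def]
  rcases eq_or_ne a 0 with ha | ha
  · -- linear case
    set y : ℝ → ℝ := fun t => p2 + (q2 - p2) * t with hydef
    set xt : ℝ → ℝ := fun t => p3 + (q3 - p3) * t with hxtdef
    have hy' : deriv y = fun _ => (q2 - p2) := by rw [hydef]; exact lin_deriv _ _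
    have hxt' : deriv xt = fun _ => (q3 - p3) := by rw [hxtdef]; exact lin_deriv _ _
    refine ⟨(deriv x 0, deriv y 0, deriv xt 0), x, y, xt, hx2, ?_, ?_, hx'', ?_, ?_, ?_, rfl, ?_⟩
    · rw [hydef]; fun_prop
    · rw [hxtdef]; fun_prop
    · intro t; rw [hy', hx', ha]; simp
    · intro t; rw [hxt', hx', ha]; simp
    · simp [hydef, hxtdef, hx0]
    · simp only [Prod.mk.injEq]
      exact ⟨hx1, by simp [hydef], by simp [hxtdef]⟩
  · -- exponential case
    have hne : Real.exp (a*1) - Real.exp (-a*1) ≠ 0 := by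
      refine sub_ne_zero.mpr (fun h => ha ?_)
      have := Real.exp_eq_exp.mp h
      linarith
    set α := (q2 - p2 * Real.exp (-a*1)) / (Real.exp (a*1) - Real.exp (-a*1)) with hα
    set β := p2 - α with hβ
    set y : ℝ → ℝ := sol α β a with hydef
    set γ := -(α^2)/2 with hγ
    set δ := β^2/2 with hδ
    set c0 := p3 - (γ + δ) with hc0
    set c1 := q3 - c0 - sol γ δ (2*a) 1 with hc1
    set xt : ℝ → ℝ := fun t => c0 + c1 * t + sol γ δ (2*a) t with hxtdef
    have hy' : deriv y = sol (a*α) (-(a*β)) a := by rw [hydef]; exact sol_deriv α β a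
    have hxt' : deriv xt = fun t => c1 + sol ((2*a)*γ) (-((2*a)*δ)) (2*a) t := by
      funext t
      rw [hxtdef]
      exact ((lin_hasDerivAt c0 c1 t).add (sol_hasDerivAt γ δ (2*a) t)).deriv
    refine ⟨(deriv x 0, deriv y 0, deriv xt 0), x, y, xt, hx2, ?_, ?_, hx'', ?_, ?_, ?_, rfl, ?_⟩
    · rw [hydef]; exact sol_contDiff α β a 2
    · rw [hxtdef]
      exact (ContDiff.add (by fun_prop) (sol_contDiff γ δ (2*a) 2))
    · -- y'' = (x')² y
      intro t
      rw [hy', sol_deriv, hx', hydef]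
      simp only [sol]; ring
    · -- xt'' = -2 y x' y'
      intro t
      rw [hxt', hx', hy']
      have H := ((hasDerivAt_const t c1).add (sol_hasDerivAt ((2*a)*γ) (-((2*a)*δ)) (2*a) t)).deriv
      rw [show deriv (fun t => c1 + sol ((2*a)*γ) (-((2*a)*δ)) (2*a) t) t = _ from H]
      have hE : Real.exp (2*a*t) = Real.exp (a*t)^2 := by
        rw [sq, ← Real.exp_add]; ring_nf
      have hF : Real.exp (-(2*a)*t) = Real.exp (-a*t)^2 := by
        rw [sq, ← Real.exp_add]; ring_nf
      simp only [sol, hydef, hγ, hδ]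
      rw [hE, hF]
      ring
    · -- initial point
      simp only [Prod.mk.injEq]
      refine ⟨hx0, ?_, ?_⟩
      · rw [hydef]; simp only [sol]; rw [hβ]; simp
      · rw [hxtdef]; simp only [sol]; rw [hc0, hγ, hδ]; simp
    · -- final point
      simp only [Prod.mk.injEq]
      refine ⟨hx1, ?_, ?_⟩
      · rw [hydef]; simp only [sol]; rw [hβ]
        have key : α * (Real.exp (a*1) - Real.exp (-a*1)) = q2 - p2 * Real.exp (-a*1) := by
          rw [hα]; field_simp
          rw [mul_div_assoc, div_self (by simpa using hne), mul_one]
        linear_combination key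
      · rw [hxtdef, hc1]; simp only [sol]; ring

theorem Sminus_exp_bijective' (P Q : ℝ × ℝ × ℝ) : ∃! v : ℝ × ℝ × ℝ, Geo P Q v := by
  obtain ⟨v, hv⟩ := exist P Q
  exact ⟨v, hv, fun w hw => uniq P Q w v hw hv⟩

end SminusAux

/-- On `S₋` (that is, `M_f` with `f(y) = -(1/2) y²`), for every pair of points
`P, Q ∈ ℝ³` there is a unique initial velocity `v` such that the geodesic
`γ = (x, y, x̃)` (solution of `x'' = 0`, `y'' = (x')² y`, `x̃'' = -2 y x' y'`)
with `γ(0) = P` and `γ'(0) = v` satisfies `γ(1) = Q`; hence the exponential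
map of `S₋` at every point is a bijection onto `ℝ³`. -/
theorem Sminus_exp_bijective (P Q : ℝ × ℝ × ℝ) :
    ∃! v : ℝ × ℝ × ℝ, ∃ x y xt : ℝ → ℝ,
      ContDiff ℝ 2 x ∧ ContDiff ℝ 2 y ∧ ContDiff ℝ 2 xt ∧
      (∀ t : ℝ, deriv (deriv x) t = 0) ∧
      (∀ t : ℝ, deriv (deriv y) t = (deriv x t) ^ 2 * y t) ∧
      (∀ t : ℝ, deriv (deriv xt) t = -2 * y t * deriv x t * deriv y t) ∧
      (x 0, y 0, xt 0) = P ∧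
      (deriv x 0, deriv y 0, deriv xt 0) = v ∧
      (x 1, y 1, xt 1) = Q := by
  show ∃! v : ℝ × ℝ × ℝ, SminusAux.Geo P Q v
  exact SminusAux.Sminus_exp_bijective' P Q
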